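/- arXiv:2007.03420 — 10 statements merged into one kernel-verified Lean document; each statement's English description precedes it below -/
import Mathlib

section
/- Let Ψ ∈ ℝ^{m×n} and b ∈ ℝ^m with b in the column space of Ψ. Then there exists a constant λ₀ > 0 such that for every λ with 0 < λ < λ₀, a vector x* ∈ ℝⁿ is a global minimizer of F(x) := ‖Ψx − b‖₂² + λ‖x‖₀ if and only if Ψx* = b and ‖x*‖₀ ≤ ‖y‖₀ for every y ∈ ℝⁿ with Ψy = b. -/
open Finset

/-- ℓ₀ "norm": number of nonzero entries. -/
noncomputable def l0norm {n : ℕ} (x : Fin n → ℝ) : ℕ :=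
  (Finset.univ.filter (fun i => x i ≠ 0)).card

section aux

variable {m n : ℕ}

/-- Vectors supported in `T`, as a submodule. -/
def suppSub (n : ℕ) (T : Finset (Fin n)) : Submodule ℝ (Fin n → ℝ) where
  carrier := {x | ∀ i ∉ T, x i = 0}
  add_mem' := by intro a b ha hb i hi; simp [ha i hi, hb i hi]
  zero_mem' := by intro i hi; rfl
  smul_mem' := by intro c x hx i hi; simp [hx i hi]

lemma l0_le_card_of_mem_suppSub {T : Finset (Fin n)} {x : Fin n → ℝ}
    (hx : x ∈ suppSub n T) : l0norm x ≤ T.card := by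
  apply Finset.card_le_card
  intro i hi
  simp only [l0norm, Finset.mem_filter] at hi
  by_contra h
  exact hi.2 (hx i h)

lemma mem_suppSub_self (x : Fin n → ℝ) :
    x ∈ suppSub n (Finset.univ.filter (fun i => x i ≠ 0)) := by
  intro i hi
  simpa using hi

lemma l0_eq_card_supp (x : Fin n → ℝ) :
    l0norm x = (Finset.univ.filter (fun i => x i ≠ 0)).card := rfl

end aux

/-- For b in the column space of Ψ, there is λ₀ > 0 such that for all
0 < λ < λ₀, x* globally minimizes F(x) = ‖Ψx − b‖₂² + λ‖x‖₀ iff Ψx* = b and x* has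
minimal ℓ₀ norm among solutions of Ψx = b. -/
theorem stmt0 {m n : ℕ} (Ψ : Matrix (Fin m) (Fin n) ℝ) (b : Fin m → ℝ)
    (hb : ∃ x : Fin n → ℝ, Ψ.mulVec x = b) :
    ∃ lam₀ : ℝ, 0 < lam₀ ∧ ∀ lam : ℝ, 0 < lam → lam < lam₀ →
      ∀ xs : Fin n → ℝ,
        (∀ x : Fin n → ℝ,
            (∑ i, (Ψ.mulVec xs i - b i) ^ 2) + lam * (l0norm xs : ℝ) ≤
              (∑ i, (Ψ.mulVec x i - b i) ^ 2) + lam * (l0norm x : ℝ)) ↔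
          (Ψ.mulVec xs = b ∧
            ∀ y : Fin n → ℝ, Ψ.mulVec y = b → l0norm xs ≤ l0norm y) := by
  classical
  -- Euclidean space setup
  set E := EuclideanSpace ℝ (Fin m) with hE
  let ι : (Fin m → ℝ) ≃ₗ[ℝ] E := (WithLp.linearEquiv 2 ℝ (Fin m → ℝ)).symm
  let L : (Fin n → ℝ) →ₗ[ℝ] E := ι.toLinearMap ∘ₗ Ψ.mulVecLin
  let bE : E := ι b
  have hLapp : ∀ (x : Fin n → ℝ) (i : Fin m), (L x - bE) i = Ψ.mulVec x i - b i := by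
    intro x i; rfl
  -- residual as a squared norm
  have hres : ∀ x : Fin n → ℝ, (∑ i, (Ψ.mulVec x i - b i) ^ 2) = ‖L x - bE‖ ^ 2 := by
    intro x
    rw [EuclideanSpace.norm_eq, Real.sq_sqrt (by positivity)]
    refine Finset.sum_congr rfl fun i _ => ?_
    rw [hLapp, Real.norm_eq_abs, sq_abs]
  have hresnn : ∀ x : Fin n → ℝ, (0:ℝ) ≤ ∑ i, (Ψ.mulVec x i - b i) ^ 2 := by
    intro x; positivity
  -- residual zero iff solution
  have hres0 : ∀ x : Fin n → ℝ, (∑ i, (Ψ.mulVec x i - b i) ^ 2) = 0 → Ψ.mulVec x = b := by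
    intro x hx
    funext i
    have := (Finset.sum_eq_zero_iff_of_nonneg (fun i _ => sq_nonneg _)).1 hx i (Finset.mem_univ i)
    have := pow_eq_zero_iff (n := 2) (by norm_num) |>.1 this
    linarith [this]
  -- image subspaces
  let W : Finset (Fin n) → Submodule ℝ E := fun T => (suppSub n T).map L
  have hWclosed : ∀ T, IsClosed (W T : Set E) := fun T =>
    Submodule.closed_of_finiteDimensional (W T)
  -- the gap constant
  let g : Finset (Fin n) → ℝ := fun T =>
    if bE ∈ W T then 1 else (Metric.infDist bE (W T)) ^ 2
  have hgpos : ∀ T, 0 < g T := by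
    intro T
    by_cases h : bE ∈ W T
    · simp [g, h]
    · simp only [g, if_neg h]
      have hne : (W T : Set E).Nonempty := ⟨0, (W T).zero_mem⟩
      have h0 : Metric.infDist bE (W T) ≠ 0 := by
        intro hc
        exact h (((hWclosed T).mem_iff_infDist_zero hne).2 hc)
      have hnn : 0 ≤ Metric.infDist bE (W T) := Metric.infDist_nonneg
      positivity
  have hne : (Finset.univ : Finset (Finset (Fin n))).Nonempty := ⟨∅, Finset.mem_univ _⟩
  let δ : ℝ := Finset.univ.inf' hne g
  have hδpos : 0 < δ := (Finset.lt_inf'_iff hne).2 fun T _ => hgpos T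
  have hδle : ∀ T, δ ≤ g T := fun T => Finset.inf'_le g (Finset.mem_univ T)
  -- residual lower bound for unsolvable supports
  have hreslb : ∀ (T : Finset (Fin n)) (x : Fin n → ℝ), x ∈ suppSub n T → bE ∉ W T →
      δ ≤ ∑ i, (Ψ.mulVec x i - b i) ^ 2 := by
    intro T x hx hbW
    have hmem : L x ∈ W T := Submodule.mem_map_of_mem hx
    have h1 : Metric.infDist bE (W T) ≤ ‖L x - bE‖ := by
      have := Metric.infDist_le_dist_of_mem (x := bE) hmem
      rwa [dist_eq_norm, norm_sub_rev] at this
    calc δ ≤ g T := hδle T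
      _ = (Metric.infDist bE (W T)) ^ 2 := by simp [g, hbW]
      _ ≤ ‖L x - bE‖ ^ 2 := by
          apply pow_le_pow_left₀ Metric.infDist_nonneg h1
      _ = ∑ i, (Ψ.mulVec x i - b i) ^ 2 := (hres x).symm
  -- solvable support gives a sparse solution
  have hsolv : ∀ (T : Finset (Fin n)), bE ∈ W T →
      ∃ z : Fin n → ℝ, Ψ.mulVec z = b ∧ l0norm z ≤ T.card := by
    intro T hT
    rcases Submodule.mem_map.1 hT with ⟨z, hz, hzb⟩
    refine ⟨z, ?_, l0_le_card_of_mem_suppSub hz⟩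
    have : ι (Ψ.mulVec z) = ι b := hzb
    exact ι.injective this
  -- minimal sparsity among solutions
  have hex : ∃ k : ℕ, ∃ x : Fin n → ℝ, Ψ.mulVec x = b ∧ l0norm x = k := by
    rcases hb with ⟨x, hx⟩; exact ⟨l0norm x, x, hx, rfl⟩
  let k : ℕ := Nat.find hex
  obtain ⟨xopt, hxopt, hxoptl0⟩ := Nat.find_spec hex
  have hkmin : ∀ y : Fin n → ℝ, Ψ.mulVec y = b → k ≤ l0norm y := by
    intro y hy
    exact Nat.find_min' hex ⟨y, hy, rfl⟩
  refine ⟨δ / (k + 1), by positivity, ?_⟩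
  intro lam hlam hlamlt xs
  have hlamk : lam * k < δ := by
    have h1 : lam * (k + 1) < δ := by
      rw [lt_div_iff₀ (by positivity)] at hlamlt
      linarith
    nlinarith
  have hFopt : (∑ i, (Ψ.mulVec xopt i - b i) ^ 2) + lam * (l0norm xopt : ℝ) = lam * k := by
    have : ∀ i, Ψ.mulVec xopt i - b i = 0 := fun i => by rw [hxopt]; ring
    rw [hxoptl0]
    simp [this, k]
  constructor
  · -- minimizer → solution with minimal sparsity
    intro hmin
    set T : Finset (Fin n) := Finset.univ.filter (fun i => xs i ≠ 0) with hT
    have hxsT : xs ∈ suppSub n T := mem_suppSub_self xs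
    have hFle : (∑ i, (Ψ.mulVec xs i - b i) ^ 2) + lam * (l0norm xs : ℝ) ≤ lam * k := by
      rw [← hFopt]; exact hmin xopt
    have hsol : Ψ.mulVec xs = b := by
      by_cases hbW : bE ∈ W T
      · -- there is a solution with support ⊆ T; minimality forces residual 0
        rcases hsolv T hbW with ⟨z, hzb, hzl0⟩
        have hcard : l0norm xs = T.card := rfl
        have hFz := hmin z
        have hzres : (∑ i, (Ψ.mulVec z i - b i) ^ 2) = 0 := by
          have : ∀ i, Ψ.mulVec z i - b i = 0 := fun i => by rw [hzb]; ring
          simp [this]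
        rw [hzres, zero_add] at hFz
        have hl0 : (l0norm z : ℝ) ≤ (l0norm xs : ℝ) := by
          exact_mod_cast hzl0.trans_eq hcard.symm
        have hres0' : (∑ i, (Ψ.mulVec xs i - b i) ^ 2) ≤ 0 := by nlinarith
        exact hres0 xs (le_antisymm hres0' (hresnn xs))
      · -- otherwise residual ≥ δ > lam * k, contradicting minimality
        exfalso
        have h1 := hreslb T xs hxsT hbW
        have h2 : (0:ℝ) ≤ lam * (l0norm xs : ℝ) := by positivity
        linarith
    refine ⟨hsol, fun y hy => ?_⟩
    have hxsres : (∑ i, (Ψ.mulVec xs i - b i) ^ 2) = 0 := by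
      have : ∀ i, Ψ.mulVec xs i - b i = 0 := fun i => by rw [hsol]; ring
      simp [this]
    rw [hxsres, zero_add] at hFle
    have : (l0norm xs : ℝ) ≤ (k : ℝ) := le_of_mul_le_mul_left (by linarith) hlam
    have hxk : l0norm xs ≤ k := by exact_mod_cast this
    exact hxk.trans (hkmin y hy)
  · -- solution with minimal sparsity → minimizer
    rintro ⟨hsol, hminl0⟩ x
    have hxsres : (∑ i, (Ψ.mulVec xs i - b i) ^ 2) = 0 := by
      have : ∀ i, Ψ.mulVec xs i - b i = 0 := fun i => by rw [hsol]; ring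
      simp [this]
    rw [hxsres, zero_add]
    have hxsk : l0norm xs ≤ k := by
      exact (hminl0 xopt hxopt).trans (le_of_eq hxoptl0)
    set T : Finset (Fin n) := Finset.univ.filter (fun i => x i ≠ 0) with hT
    by_cases hbW : bE ∈ W T
    · rcases hsolv T hbW with ⟨z, hzb, hzl0⟩
      have hxz : l0norm xs ≤ l0norm x := (hminl0 z hzb).trans (hzl0.trans_eq rfl)
      have : lam * (l0norm xs : ℝ) ≤ lam * (l0norm x : ℝ) := by
        apply mul_le_mul_of_nonneg_left (by exact_mod_cast hxz) hlam.le
      linarith [hresnn x]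
    · have h1 := hreslb T x (mem_suppSub_self x) hbW
      have h2 : lam * (l0norm xs : ℝ) ≤ lam * k := by
        apply mul_le_mul_of_nonneg_left (by exact_mod_cast hxsk) hlam.le
      have h3 : (0:ℝ) ≤ lam * (l0norm x : ℝ) := by positivity
      linarith
end

section
/- Let Ψ ∈ ℝ^{m×n}, b ∈ ℝ^m and δ > 0. If x* minimizes ‖x‖_{g_δ} over {x ∈ ℝⁿ : Ψx = b}, then the columns of Ψ indexed by supp(x*) are linearly independent. -/
open Finset

lemma arctan_strictConcave : StrictConcaveOn ℝ (Set.Ici (0:ℝ)) Real.arctan := by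
  apply StrictAntiOn.strictConcaveOn_of_deriv (convex_Ici 0)
    Real.continuous_arctan.continuousOn
  rw [Real.deriv_arctan, interior_Ici]
  intro x hx y hy hxy
  have hx0 : (0:ℝ) < 1 + x ^ 2 := by positivity
  have : 1 + x ^ 2 < 1 + y ^ 2 := by
    have := pow_lt_pow_left₀ hxy (le_of_lt hx) (by norm_num : 2 ≠ 0)
    linarith
  exact one_div_lt_one_div_of_lt hx0 this

lemma key_pos {δ : ℝ} (hδ : 0 < δ) {a c : ℝ} (hc : c ≠ 0)
    (h1 : 0 < a + c) (h2 : 0 < a - c) :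
    Real.arctan ((a + c) / δ) + Real.arctan ((a - c) / δ) < 2 * Real.arctan (a / δ) := by
  have hne : (a + c) / δ ≠ (a - c) / δ := by
    intro h
    apply hc
    field_simp at h
    linarith
  have := arctan_strictConcave.2
    (Set.mem_Ici.mpr (by positivity : (0:ℝ) ≤ (a+c)/δ))
    (Set.mem_Ici.mpr (by positivity : (0:ℝ) ≤ (a-c)/δ)) hne
    (by norm_num : (0:ℝ) < 1/2) (by norm_num : (0:ℝ) < 1/2)
    (by norm_num : (1:ℝ)/2 + 1/2 = 1)
  have hmid : (1/2 : ℝ) • ((a+c)/δ) + (1/2 : ℝ) • ((a-c)/δ) = a / δ := by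
    simp only [smul_eq_mul]; ring
  rw [hmid] at this
  simp only [smul_eq_mul] at this
  linarith

lemma key_abs {δ : ℝ} (hδ : 0 < δ) {a c : ℝ} (hc : c ≠ 0) (hlt : |c| < |a|) :
    Real.arctan (|a + c| / δ) + Real.arctan (|a - c| / δ) < 2 * Real.arctan (|a| / δ) := by
  have habs := abs_lt.mp hlt
  rcases abs_cases a with ⟨ha1, ha2⟩ | ⟨ha1, ha2⟩
  · have h1 : 0 < a + c := by rw [ha1] at habs; linarith [habs.1]
    have h2 : 0 < a - c := by rw [ha1] at habs; linarith [habs.2]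
    rw [abs_of_pos h1, abs_of_pos h2, ha1]
    exact key_pos hδ hc h1 h2
  · rw [ha1] at habs
    have h1 : a + c < 0 := by linarith [habs.2]
    have h2 : a - c < 0 := by linarith [habs.1]
    rw [abs_of_neg h1, abs_of_neg h2, ha1]
    have := key_pos hδ (a := -a) (c := -c) (neg_ne_zero.mpr hc)
      (by linarith) (by linarith)
    have e1 : -(a + c) = -a + -c := by ring
    have e2 : -(a - c) = -a - -c := by ring
    rw [e1, e2]
    exact this

/-- If x* minimizes the atan-sum penalty ‖x‖_{g_δ} = ∑ arctan(|xᵢ|/δ)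
over {x : Ψx = b}, then the columns of Ψ indexed by supp(x*) are linearly independent. -/
theorem stmt1 {m n : ℕ} (Ψ : Matrix (Fin m) (Fin n) ℝ) (b : Fin m → ℝ) (δ : ℝ) (hδ : 0 < δ)
    (xs : Fin n → ℝ) (hfeas : Ψ.mulVec xs = b)
    (hmin : ∀ y : Fin n → ℝ, Ψ.mulVec y = b →
      ∑ i, Real.arctan (|xs i| / δ) ≤ ∑ i, Real.arctan (|y i| / δ)) :
    LinearIndependent ℝ (fun j : {j : Fin n // xs j ≠ 0} => (fun i => Ψ i j.1 : Fin m → ℝ)) := by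
  classical
  by_contra hdep
  rw [Fintype.not_linearIndependent_iff] at hdep
  obtain ⟨g, hg0, k, hk⟩ := hdep
  set v : Fin n → ℝ := fun j => if h : xs j = 0 then 0 else g ⟨j, h⟩ with hv
  have hvsub : ∀ j : {j : Fin n // xs j ≠ 0}, v j.1 = g j := by
    rintro ⟨j, hj⟩
    simp [hv, hj]
  have hv0 : ∀ j, xs j = 0 → v j = 0 := fun j h => by simp [hv, h]
  have hΨv : Ψ.mulVec v = 0 := by
    funext i
    have h0 := congrFun hg0 i
    simp only [Finset.sum_apply, Pi.smul_apply, smul_eq_mul, Pi.zero_apply] at h0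
    calc Ψ.mulVec v i = ∑ j, Ψ i j * v j := rfl
      _ = ∑ j : {j : Fin n // xs j ≠ 0}, Ψ i j.1 * v j.1 := by
          rw [← Finset.sum_subtype (Finset.univ.filter (fun j => xs j ≠ 0))
            (by simp) (fun j => Ψ i j * v j)]
          refine (Finset.sum_filter_of_ne fun j _ hne => ?_).symm
          intro hxs
          exact hne (by rw [hv0 j hxs, mul_zero])
      _ = ∑ j : {j : Fin n // xs j ≠ 0}, g j * Ψ i j.1 := by
          refine Finset.sum_congr rfl fun j _ => ?_
          rw [hvsub j]; ring
      _ = 0 := h0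
  -- choose ε
  have hkS : k.1 ∈ Finset.univ.filter (fun j => xs j ≠ 0) := by simp [k.2]
  set S := Finset.univ.filter (fun j : Fin n => xs j ≠ 0) with hS
  have hSne : S.Nonempty := ⟨k.1, hkS⟩
  set ε := S.inf' hSne (fun j => |xs j| / (1 + |v j|)) with hε
  have hε0 : 0 < ε := by
    rw [hε, Finset.lt_inf'_iff]
    intro j hj
    have hj' : xs j ≠ 0 := by simpa [hS] using hj
    have : 0 < |xs j| := abs_pos.mpr hj'
    positivity
  have hεv : ∀ j, xs j ≠ 0 → ε * |v j| < |xs j| := by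
    intro j hj
    have hmem : j ∈ S := by simp [hS, hj]
    have hle : ε ≤ |xs j| / (1 + |v j|) := Finset.inf'_le _ hmem
    have hd : (0:ℝ) < 1 + |v j| := by positivity
    have hxj : 0 < |xs j| := abs_pos.mpr hj
    calc ε * |v j| ≤ (|xs j| / (1 + |v j|)) * |v j| :=
          mul_le_mul_of_nonneg_right hle (abs_nonneg _)
      _ < |xs j| := by
          rw [div_mul_eq_mul_div, div_lt_iff₀ hd]
          nlinarith [abs_nonneg (v j)]
  -- feasibility of perturbations
  have hfeas1 : Ψ.mulVec (xs + ε • v) = b := by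
    rw [Matrix.mulVec_add, Matrix.mulVec_smul, hΨv, smul_zero, add_zero, hfeas]
  have hfeas2 : Ψ.mulVec (xs - ε • v) = b := by
    rw [Matrix.mulVec_sub, Matrix.mulVec_smul, hΨv, smul_zero, sub_zero, hfeas]
  have h1 := hmin _ hfeas1
  have h2 := hmin _ hfeas2
  simp only [Pi.add_apply, Pi.sub_apply, Pi.smul_apply, smul_eq_mul] at h1 h2
  -- strict concavity sum inequality
  have hsum : ∑ i, (Real.arctan (|xs i + ε * v i| / δ) + Real.arctan (|xs i - ε * v i| / δ))
      < ∑ i, 2 * Real.arctan (|xs i| / δ) := by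
    apply Finset.sum_lt_sum
    · intro i _
      by_cases hvi : v i = 0
      · simp [hvi]; ring_nf; simp
      · have hxi : xs i ≠ 0 := fun h => hvi (hv0 i h)
        have hc : ε * v i ≠ 0 := mul_ne_zero (ne_of_gt hε0) hvi
        have hlt : |ε * v i| < |xs i| := by
          rw [abs_mul, abs_of_pos hε0]; exact hεv i hxi
        exact le_of_lt (key_abs hδ hc hlt)
    · refine ⟨k.1, Finset.mem_univ _, ?_⟩
      have hvk : v k.1 ≠ 0 := by rw [hvsub k]; exact hk
      have hxi : xs k.1 ≠ 0 := k.2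
      have hc : ε * v k.1 ≠ 0 := mul_ne_zero (ne_of_gt hε0) hvk
      have hlt : |ε * v k.1| < |xs k.1| := by
        rw [abs_mul, abs_of_pos hε0]; exact hεv k.1 hxi
      exact key_abs hδ hc hlt
  rw [Finset.sum_add_distrib, ← Finset.mul_sum] at hsum
  linarith
end

section
/- Let x, y ∈ ℝⁿ with ‖x‖₀ < ‖y‖₀. Then there exists δ₀ > 0 such that for all δ with 0 < δ < δ₀, ∑_{i=1}^n arctan(|x_i|/δ) < ∑_{i=1}^n arctan(|y_i|/δ). -/
open Finset

lemma atan_sum_tendsto {n : ℕ} (z : Fin n → ℝ) :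
    Filter.Tendsto (fun δ : ℝ => ∑ i, Real.arctan (|z i| / δ))
      (nhdsWithin 0 (Set.Ioi 0))
      (nhds (((Finset.univ.filter (fun i => z i ≠ 0)).card : ℝ) * (Real.pi / 2))) := by
  have key : ∀ i : Fin n, Filter.Tendsto (fun δ : ℝ => Real.arctan (|z i| / δ))
      (nhdsWithin 0 (Set.Ioi 0)) (nhds (if z i ≠ 0 then Real.pi / 2 else 0)) := by
    intro i
    by_cases hz : z i = 0
    · simp [hz, tendsto_const_nhds]
    · simp only [hz, if_pos, ne_eq, not_false_iff, if_true]
      have h1 : Filter.Tendsto (fun δ : ℝ => |z i| / δ) (nhdsWithin 0 (Set.Ioi 0))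
          Filter.atTop := by
        have := tendsto_inv_nhdsGT_zero.const_mul_atTop (abs_pos.mpr hz)
        simpa [div_eq_mul_inv] using this
      exact (Real.tendsto_arctan_atTop.mono_right nhdsWithin_le_nhds).comp h1
  have hsum := tendsto_finset_sum Finset.univ (fun i _ => key i)
  have : (∑ i, if z i ≠ 0 then Real.pi / 2 else 0) =
      ((Finset.univ.filter (fun i => z i ≠ 0)).card : ℝ) * (Real.pi / 2) := by
    rw [Finset.sum_ite, Finset.sum_const, Finset.sum_const]
    simp [nsmul_eq_mul]
  rwa [this] at hsum

/-- If ‖x‖₀ < ‖y‖₀ then for all sufficiently small δ > 0 the atan-sum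
penalty of x is strictly smaller than that of y. -/
theorem stmt4 {n : ℕ} (x y : Fin n → ℝ)
    (h : (Finset.univ.filter (fun i => x i ≠ 0)).card <
          (Finset.univ.filter (fun i => y i ≠ 0)).card) :
    ∃ δ₀ : ℝ, 0 < δ₀ ∧ ∀ δ : ℝ, 0 < δ → δ < δ₀ →
      ∑ i, Real.arctan (|x i| / δ) < ∑ i, Real.arctan (|y i| / δ) := by
  have hlt : ((Finset.univ.filter (fun i => x i ≠ 0)).card : ℝ) * (Real.pi / 2) <
      ((Finset.univ.filter (fun i => y i ≠ 0)).card : ℝ) * (Real.pi / 2) := by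
    have := Real.pi_pos
    apply mul_lt_mul_of_pos_right
    · exact_mod_cast h
    · linarith
  have hev := (atan_sum_tendsto x).eventually_lt (atan_sum_tendsto y) hlt
  rw [eventually_nhdsWithin_iff, Metric.eventually_nhds_iff] at hev
  obtain ⟨ε, hε, hP⟩ := hev
  refine ⟨ε, hε, fun δ hδ hδε => ?_⟩
  exact hP (by simpa [Real.dist_eq, abs_of_pos hδ] using hδε) hδ
end

section
/- For every x ∈ ℝⁿ, the atan-sum penalty converges to (π/2)·‖x‖₀ as δ → 0⁺, i.e., lim_{δ→0⁺} ∑_{i=1}^n arctan(|x_i|/δ) = (π/2)·‖x‖₀. -/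
open Finset

lemma atan_term_tendsto (c : ℝ) (hc : c ≠ 0) :
    Filter.Tendsto (fun δ : ℝ => Real.arctan (|c| / δ))
      (nhdsWithin 0 (Set.Ioi 0)) (nhds (Real.pi / 2)) := by
  have h1 : Filter.Tendsto (fun δ : ℝ => |c| / δ) (nhdsWithin 0 (Set.Ioi 0)) Filter.atTop := by
    apply Filter.Tendsto.const_mul_atTop (abs_pos.mpr hc)
    simpa using tendsto_inv_nhdsGT_zero
  exact (Real.tendsto_arctan_atTop.mono_right nhdsWithin_le_nhds).comp h1

/-- As δ → 0⁺, the atan-sum penalty ∑ arctan(|xᵢ|/δ) converges to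
(π/2)·‖x‖₀. -/
theorem stmt5 {n : ℕ} (x : Fin n → ℝ) :
    Filter.Tendsto (fun δ : ℝ => ∑ i, Real.arctan (|x i| / δ))
      (nhdsWithin 0 (Set.Ioi 0))
      (nhds ((Real.pi / 2) * ((Finset.univ.filter (fun i => x i ≠ 0)).card : ℝ))) := by
  have key : (Real.pi / 2) * ((Finset.univ.filter (fun i => x i ≠ 0)).card : ℝ)
      = ∑ i : Fin n, (if x i ≠ 0 then Real.pi / 2 else 0) := by
    rw [Finset.sum_ite, Finset.sum_const, Finset.sum_const]
    simp [mul_comm]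
  rw [key]
  apply tendsto_finset_sum
  intro i _
  by_cases h : x i = 0
  · simp [h, Real.arctan_zero, tendsto_const_nhds]
  · simpa [h] using atan_term_tendsto (x i) h
end

section
/- Let Ψ ∈ ℝ^{m×n}, b ∈ ℝ^m, λ > 0, δ > 0, and let x* be a global minimizer of G_δ(x) := ‖Ψx − b‖₂² + λ‖x‖_{g_δ} over ℝⁿ. Then for every h ∈ ℝⁿ with supp(h) ⊆ supp(x*), one has 2⟨b − Ψx*, Ψh⟩ = λ ∑_{i ∈ supp(x*)} δ·h_i·sgn(x*_i)/(δ² + (x*_i)²); in particular, for every index i with x*_i ≠ 0, 2(Ψᵀ(b − Ψx*))_i = λ·δ·sgn(x*_i)/(δ² + (x*_i)²). -/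
open Finset

/-- First-order conditions at a global minimizer x* of
G_δ(x) = ‖Ψx − b‖₂² + λ‖x‖_{g_δ}: for every h with supp(h) ⊆ supp(x*),
2⟨b − Ψx*, Ψh⟩ = λ ∑_{i ∈ supp(x*)} δ hᵢ sgn(x*ᵢ)/(δ² + (x*ᵢ)²); in particular
2(Ψᵀ(b − Ψx*))ᵢ = λ δ sgn(x*ᵢ)/(δ² + (x*ᵢ)²) for every i ∈ supp(x*). -/
theorem stmt7 {m n : ℕ} (Ψ : Matrix (Fin m) (Fin n) ℝ) (b : Fin m → ℝ)
    (lam δ : ℝ) (hlam : 0 < lam) (hδ : 0 < δ) (xs : Fin n → ℝ)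
    (hmin : ∀ x : Fin n → ℝ,
      (∑ i, (Ψ.mulVec xs i - b i) ^ 2) + lam * ∑ i, Real.arctan (|xs i| / δ) ≤
        (∑ i, (Ψ.mulVec x i - b i) ^ 2) + lam * ∑ i, Real.arctan (|x i| / δ)) :
    (∀ h : Fin n → ℝ, (∀ i, h i ≠ 0 → xs i ≠ 0) →
      2 * ∑ i, (b i - Ψ.mulVec xs i) * Ψ.mulVec h i =
        lam * ∑ i ∈ Finset.univ.filter (fun i => xs i ≠ 0),
          δ * h i * Real.sign (xs i) / (δ ^ 2 + xs i ^ 2)) ∧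
    (∀ i : Fin n, xs i ≠ 0 →
      2 * Ψ.transpose.mulVec (fun k => b k - Ψ.mulVec xs k) i =
        lam * δ * Real.sign (xs i) / (δ ^ 2 + xs i ^ 2)) := by
  have hδ2 : ∀ i : Fin n, δ ^ 2 + xs i ^ 2 ≠ 0 := by
    intro i
    positivity
  have key : ∀ h : Fin n → ℝ, (∀ i, h i ≠ 0 → xs i ≠ 0) →
      2 * ∑ i, (b i - Ψ.mulVec xs i) * Ψ.mulVec h i =
        lam * ∑ i ∈ Finset.univ.filter (fun i => xs i ≠ 0),
          δ * h i * Real.sign (xs i) / (δ ^ 2 + xs i ^ 2) := by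
    intro h hsupp
    set φ : ℝ → ℝ := fun t =>
      (∑ i, (Ψ.mulVec xs i + t * Ψ.mulVec h i - b i) ^ 2)
        + lam * ∑ i, Real.arctan (|xs i + t * h i| / δ) with hφ
    have hlin : ∀ (t : ℝ) (i : Fin m),
        Ψ.mulVec (fun j => xs j + t * h j) i = Ψ.mulVec xs i + t * Ψ.mulVec h i := by
      intro t i
      simp only [Matrix.mulVec, dotProduct]
      rw [Finset.mul_sum, ← Finset.sum_add_distrib]
      exact Finset.sum_congr rfl fun j _ => by ring
    have hloc : IsLocalMin φ 0 := by
      apply Filter.Eventually.of_forall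
      intro t
      have := hmin (fun j => xs j + t * h j)
      simp only [hφ]
      simp only [hlin] at this
      simpa using this
    have hderiv : HasDerivAt φ ((∑ i, 2 * (Ψ.mulVec xs i - b i) * Ψ.mulVec h i)
        + lam * ∑ i, δ * h i * Real.sign (xs i) / (δ ^ 2 + xs i ^ 2)) 0 := by
      apply HasDerivAt.add
      · apply HasDerivAt.fun_sum
        intro i _
        have h1 : HasDerivAt (fun t : ℝ => Ψ.mulVec xs i + t * Ψ.mulVec h i - b i)
            (Ψ.mulVec h i) 0 := by
          simpa using (((hasDerivAt_id (0:ℝ)).mul_const (Ψ.mulVec h i)).const_add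
            (Ψ.mulVec xs i)).sub_const (b i)
        have := h1.fun_pow 2
        simpa using this.congr_deriv (by ring)
      · apply HasDerivAt.const_mul
        apply HasDerivAt.fun_sum
        intro i _
        by_cases hhi : h i = 0
        · simp only [hhi, mul_zero, zero_mul, add_zero, zero_div]
          exact hasDerivAt_const _ _
        · have hxi := hsupp i hhi
          set s := Real.sign (xs i) with hs
          have hs2 : s * s = 1 := by
            rcases hxi.lt_or_gt with hlt | hlt
            · simp [hs, Real.sign_of_neg hlt]
            · simp [hs, Real.sign_of_pos hlt]
          have hinner : HasDerivAt (fun t : ℝ => s * (xs i + t * h i) / δ) (s * h i / δ) 0 := by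
            have : HasDerivAt (fun t : ℝ => xs i + t * h i) (h i) 0 := by
              simpa using ((hasDerivAt_id (0:ℝ)).mul_const (h i)).const_add (xs i)
            exact (this.const_mul s).div_const δ
          have harc := (Real.hasDerivAt_arctan (s * (xs i + 0 * h i) / δ)).comp 0 hinner
          have hev : (fun t : ℝ => Real.arctan (|xs i + t * h i| / δ)) =ᶠ[nhds 0]
              (fun t : ℝ => Real.arctan (s * (xs i + t * h i) / δ)) := by
            have hcont : Continuous (fun t : ℝ => xs i + t * h i) := by continuity
            rcases hxi.lt_or_gt with hlt | hlt
            · have hopen : ∀ᶠ t in nhds (0:ℝ), xs i + t * h i < 0 := by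
                have := hcont.continuousAt (x := (0:ℝ))
                have h0 : xs i + (0:ℝ) * h i < 0 := by simpa using hlt
                exact (this.eventually_lt continuousAt_const h0)
              filter_upwards [hopen] with t ht
              rw [abs_of_neg ht, hs, Real.sign_of_neg hlt]
              ring_nf
            · have hopen : ∀ᶠ t in nhds (0:ℝ), 0 < xs i + t * h i := by
                have := hcont.continuousAt (x := (0:ℝ))
                have h0 : (0:ℝ) < xs i + (0:ℝ) * h i := by simpa using hlt
                exact (continuousAt_const.eventually_lt this h0)
              filter_upwards [hopen] with t ht
              rw [abs_of_pos ht, hs, Real.sign_of_pos hlt]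
              ring_nf
          have := harc.congr_of_eventuallyEq hev
          convert this using 1
          have : (s * (xs i + 0 * h i) / δ) ^ 2 = xs i ^ 2 / δ ^ 2 := by
            field_simp
            ring_nf
            rw [mul_comm (s^2)]
            rw [show s ^ 2 = 1 by rw [sq]; exact hs2]
            ring
          rw [this]
          have hδ' : (δ:ℝ) ≠ 0 := ne_of_gt hδ
          field_simp
    have hzero := hloc.hasDerivAt_eq_zero hderiv
    have hfilter : ∑ i ∈ Finset.univ.filter (fun i => xs i ≠ 0),
        δ * h i * Real.sign (xs i) / (δ ^ 2 + xs i ^ 2)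
        = ∑ i, δ * h i * Real.sign (xs i) / (δ ^ 2 + xs i ^ 2) := by
      apply Finset.sum_filter_of_ne
      intro i _ hne
      intro hxi0
      apply hne
      simp [hxi0]
    rw [hfilter]
    have : 2 * ∑ i, (b i - Ψ.mulVec xs i) * Ψ.mulVec h i
        = -(∑ i, 2 * (Ψ.mulVec xs i - b i) * Ψ.mulVec h i) := by
      rw [Finset.mul_sum, ← Finset.sum_neg_distrib]
      exact Finset.sum_congr rfl fun i _ => by ring
    rw [this]
    linarith [hzero]
  refine ⟨key, ?_⟩
  intro i hi
  have hsupp : ∀ j, (Pi.single i 1 : Fin n → ℝ) j ≠ 0 → xs j ≠ 0 := by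
    intro j hj
    by_cases hji : j = i
    · rw [hji]; exact hi
    · simp [hji] at hj
  have := key (Pi.single i 1) hsupp
  have hL : ∑ k, (b k - Ψ.mulVec xs k) * Ψ.mulVec (Pi.single i 1 : Fin n → ℝ) k
      = Ψ.transpose.mulVec (fun k => b k - Ψ.mulVec xs k) i := by
    have hms : Ψ.mulVec (Pi.single i 1 : Fin n → ℝ) = fun k => Ψ k i * 1 :=
      Matrix.mulVec_single _ _ _
    simp only [hms, mul_one]
    simp only [Matrix.mulVec, dotProduct, Matrix.transpose_apply]
    exact Finset.sum_congr rfl fun k _ => by ring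
  have hR : ∑ j ∈ Finset.univ.filter (fun j => xs j ≠ 0),
      δ * (Pi.single i 1 : Fin n → ℝ) j * Real.sign (xs j) / (δ ^ 2 + xs j ^ 2)
      = δ * Real.sign (xs i) / (δ ^ 2 + xs i ^ 2) := by
    rw [Finset.sum_eq_single_of_mem i (by simp [hi])]
    · simp
    · intro j _ hji
      rw [Pi.single_eq_of_ne hji]
      simp
  rw [hL, hR] at this
  rw [this]
  ring
end

section
/- Let Ψ ∈ ℝ^{m×n}, b ∈ ℝ^m, δ > 0, and λ > 2‖b‖₂²/π. If x* is a global minimizer of G_δ(x) := ‖Ψx − b‖₂² + λ‖x‖_{g_δ} over ℝⁿ, then ‖x*‖_∞ ≤ δ·tan(‖b‖₂²/λ). -/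
open Finset

/-- If λ > 2‖b‖₂²/π and x* globally minimizes
G_δ(x) = ‖Ψx − b‖₂² + λ‖x‖_{g_δ}, then ‖x*‖_∞ ≤ δ·tan(‖b‖₂²/λ). -/
theorem stmt9 {m n : ℕ} (Ψ : Matrix (Fin m) (Fin n) ℝ) (b : Fin m → ℝ)
    (lam δ : ℝ) (hδ : 0 < δ) (hlam : 2 * (∑ i, b i ^ 2) / Real.pi < lam)
    (xs : Fin n → ℝ)
    (hmin : ∀ x : Fin n → ℝ,
      (∑ i, (Ψ.mulVec xs i - b i) ^ 2) + lam * ∑ i, Real.arctan (|xs i| / δ) ≤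
        (∑ i, (Ψ.mulVec x i - b i) ^ 2) + lam * ∑ i, Real.arctan (|x i| / δ)) :
    ∀ i : Fin n, |xs i| ≤ δ * Real.tan ((∑ i, b i ^ 2) / lam) := by
  set B : ℝ := ∑ i, b i ^ 2 with hBdef
  have hB : 0 ≤ B := Finset.sum_nonneg fun i _ => sq_nonneg _
  have hlam0 : 0 < lam :=
    lt_of_le_of_lt (by positivity) hlam
  have h0 := hmin 0
  have hmv0 : ∀ i, Ψ.mulVec (0 : Fin n → ℝ) i = 0 := by
    intro i; simp [Matrix.mulVec]
  have hG0 : (∑ i, (Ψ.mulVec (0 : Fin n → ℝ) i - b i) ^ 2) +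
      lam * ∑ i, Real.arctan (|(0 : Fin n → ℝ) i| / δ) = B := by
    simp [hmv0, hBdef]
  rw [hG0] at h0
  have hsum : lam * ∑ i, Real.arctan (|xs i| / δ) ≤ B := by
    have := Finset.sum_nonneg (fun i (_ : i ∈ Finset.univ) =>
      sq_nonneg (Ψ.mulVec xs i - b i))
    linarith
  intro i
  have hterm : Real.arctan (|xs i| / δ) ≤ (∑ j, Real.arctan (|xs j| / δ)) := by
    exact Finset.single_le_sum (f := fun j => Real.arctan (|xs j| / δ)) (fun j _ => by simpa using Real.arctan_strictMono.monotone (show (0:ℝ) ≤ |xs j|/δ by positivity))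
      (Finset.mem_univ i)
  have h1 : Real.arctan (|xs i| / δ) ≤ B / lam := by
    rw [le_div_iff₀ hlam0]
    calc Real.arctan (|xs i| / δ) * lam = lam * Real.arctan (|xs i| / δ) := mul_comm _ _
    _ ≤ lam * ∑ j, Real.arctan (|xs j| / δ) := by
        exact mul_le_mul_of_nonneg_left hterm hlam0.le
    _ ≤ B := hsum
  have hBl : B / lam < Real.pi / 2 := by
    rw [div_lt_div_iff₀ hlam0 two_pos]
    have hπ : 0 < Real.pi := Real.pi_pos
    rw [div_lt_iff₀ hπ] at hlam
    linarith
  have hBl0 : -(Real.pi / 2) < B / lam := by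
    have : (0:ℝ) ≤ B / lam := by positivity
    nlinarith [Real.pi_pos]
  have h2 : Real.arctan (|xs i| / δ) ≤ Real.arctan (Real.tan (B / lam)) := by
    rwa [Real.arctan_tan hBl0 hBl]
  have h3 : |xs i| / δ ≤ Real.tan (B / lam) :=
    Real.arctan_strictMono.le_iff_le.mp h2
  calc |xs i| = (|xs i| / δ) * δ := by field_simp
  _ ≤ Real.tan (B / lam) * δ := mul_le_mul_of_nonneg_right h3 hδ.le
  _ = δ * Real.tan (B / lam) := mul_comm _ _
end

section
/- Let Ψ ∈ ℝ^{m×n}, b ∈ ℝ^m, λ > 0, δ > 0, and let x* be a global minimizer of G_δ(x) := ‖Ψx − b‖₂² + λ‖x‖_{g_δ} over ℝⁿ with x* ≠ 0. Then ‖Ψᵀ(Ψx* − b)‖₂² ≥ (λ²/4)·δ²/(δ² + ‖x*‖_∞²)². -/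
open Finset

lemma arctan_abs_deriv (δ : ℝ) (hδ : 0 < δ) (t₀ : ℝ) (ht : t₀ ≠ 0) :
    HasDerivAt (fun t => Real.arctan (|t| / δ))
      ((if 0 < t₀ then (1:ℝ) else -1) * (δ / (δ ^ 2 + t₀ ^ 2))) t₀ := by
  have hbase : ∀ u : ℝ, HasDerivAt (fun t => Real.arctan (t / δ)) (δ / (δ ^ 2 + u ^ 2)) u := by
    intro u
    have h1 : HasDerivAt (fun t : ℝ => t / δ) (1 / δ) u := by
      simpa using (hasDerivAt_id u).div_const δ
    have h2 := (Real.hasDerivAt_arctan (u / δ)).comp u h1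
    refine h2.congr_deriv ?_
    field_simp
  rcases lt_or_gt_of_ne ht with hneg | hpos
  · have hn : HasDerivAt (fun t : ℝ => Real.arctan (-t / δ)) (δ / (δ ^ 2 + t₀ ^ 2) * (-1)) t₀ := by
      have := ((hbase (-t₀)).comp t₀ (hasDerivAt_neg t₀))
      simpa [neg_pow, Function.comp_def] using this
    have he : (fun t => Real.arctan (|t| / δ)) =ᶠ[nhds t₀] (fun t : ℝ => Real.arctan (-t / δ)) :=
      (eventually_lt_nhds hneg).mono fun t htn => by show Real.arctan (|t| / δ) = Real.arctan (-t / δ); rw [abs_of_neg htn]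
    have := hn.congr_of_eventuallyEq he
    simpa [if_neg (not_lt.mpr hneg.le)] using this.neg.neg
  · have he : (fun t => Real.arctan (|t| / δ)) =ᶠ[nhds t₀] (fun t : ℝ => Real.arctan (t / δ)) :=
      (eventually_gt_nhds hpos).mono fun t htp => by show Real.arctan (|t| / δ) = Real.arctan (t / δ); rw [abs_of_pos htp]
    simpa [if_pos hpos] using (hbase t₀).congr_of_eventuallyEq he

/-- If x* ≠ 0 globally minimizes G_δ(x) = ‖Ψx − b‖₂² + λ‖x‖_{g_δ}, then
‖Ψᵀ(Ψx* − b)‖₂² ≥ (λ²/4)·δ²/(δ² + ‖x*‖_∞²)², where ‖x*‖_∞ = ⨆ i, |x*ᵢ|. -/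
theorem stmt10 {m n : ℕ} (Ψ : Matrix (Fin m) (Fin n) ℝ) (b : Fin m → ℝ)
    (lam δ : ℝ) (hlam : 0 < lam) (hδ : 0 < δ) (xs : Fin n → ℝ) (hxs : xs ≠ 0)
    (hmin : ∀ x : Fin n → ℝ,
      (∑ i, (Ψ.mulVec xs i - b i) ^ 2) + lam * ∑ i, Real.arctan (|xs i| / δ) ≤
        (∑ i, (Ψ.mulVec x i - b i) ^ 2) + lam * ∑ i, Real.arctan (|x i| / δ)) :
    ∑ j, (Ψ.transpose.mulVec (fun i => Ψ.mulVec xs i - b i)) j ^ 2 ≥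
      lam ^ 2 / 4 * (δ ^ 2 / (δ ^ 2 + (⨆ i, |xs i|) ^ 2) ^ 2) := by
  -- pick j maximizing |xs j|
  have hk : ∃ k, xs k ≠ 0 := by
    by_contra h
    push_neg at h
    exact hxs (funext fun k => h k)
  obtain ⟨k, hk⟩ := hk
  have hne : Nonempty (Fin n) := ⟨k⟩
  obtain ⟨j, hj⟩ := Finite.exists_max (fun i => |xs i|)
  have hjne : xs j ≠ 0 := by
    intro h0
    have := hj k
    rw [h0, abs_zero] at this
    exact hk (abs_eq_zero.mp (le_antisymm this (abs_nonneg _)))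
  have hsup : (⨆ i, |xs i|) = |xs j| :=
    le_antisymm (ciSup_le hj) (le_ciSup (f := fun i => |xs i|) (Set.Finite.bddAbove (Set.finite_range _)) j)
  set r : Fin m → ℝ := fun i => Ψ.mulVec xs i - b i with hr
  -- the one-dimensional restriction
  set F : ℝ → ℝ := fun t =>
    (∑ i, (r i + Ψ i j * (t - xs j)) ^ 2) + lam * Real.arctan (|t| / δ) with hF
  have hupd : ∀ t i, Ψ.mulVec (Function.update xs j t) i = Ψ.mulVec xs i + Ψ i j * (t - xs j) := by
    intro t i
    simp only [Matrix.mulVec, dotProduct]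
    have : ∀ l, Ψ i l * Function.update xs j t l
        = Ψ i l * xs l + (if l = j then Ψ i j * (t - xs j) else 0) := by
      intro l
      by_cases hl : l = j
      · subst hl; simp [Function.update_self]; ring
      · simp [Function.update_of_ne hl, if_neg hl]
    rw [Finset.sum_congr rfl fun l _ => this l, Finset.sum_add_distrib,
      Finset.sum_ite_eq' Finset.univ j]
    simp
  have hpen : ∀ t, (∑ l, Real.arctan (|Function.update xs j t l| / δ))
      = Real.arctan (|t| / δ) + ∑ l ∈ Finset.univ.erase j, Real.arctan (|xs l| / δ) := by
    intro t
    have hfe : (fun l => Real.arctan (|Function.update xs j t l| / δ))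
        = Function.update (fun l => Real.arctan (|xs l| / δ)) j (Real.arctan (|t| / δ)) := by
      funext l
      by_cases hl : l = j
      · subst hl; simp
      · simp [Function.update_of_ne hl]
    rw [hfe, Finset.sum_update_of_mem (Finset.mem_univ j)]
    simp [Finset.sdiff_singleton_eq_erase]
  have hmin' : ∀ t, F (xs j) ≤ F t := by
    intro t
    have h := hmin (Function.update xs j t)
    have h1 : ∀ i, Ψ.mulVec (Function.update xs j t) i - b i = r i + Ψ i j * (t - xs j) := by
      intro i; rw [hupd]; simp only [hr]; ring
    simp only [h1, hpen t] at h
    have h2 := hpen (xs j)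
    rw [Function.update_eq_self] at h2
    rw [h2] at h
    simp only [hF]
    have e1 : ∑ i, (r i + Ψ i j * (xs j - xs j)) ^ 2 = ∑ i, (Ψ.mulVec xs i - b i) ^ 2 := by
      simp [hr]
    rw [e1]
    simp only [mul_add] at h
    linarith
  have hloc : IsLocalMin F (xs j) := Filter.Eventually.of_forall hmin'
  set s : ℝ := if 0 < xs j then (1:ℝ) else -1 with hs
  have hD : HasDerivAt F ((∑ i, 2 * r i * Ψ i j) + lam * (s * (δ / (δ ^ 2 + (xs j) ^ 2)))) (xs j) := by
    have hq : HasDerivAt (fun t => ∑ i, (r i + Ψ i j * (t - xs j)) ^ 2)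
        (∑ i, 2 * r i * Ψ i j) (xs j) := by
      apply HasDerivAt.fun_sum
      intro i _
      have h1 : HasDerivAt (fun t : ℝ => r i + Ψ i j * (t - xs j)) (Ψ i j) (xs j) := by
        simpa using (((hasDerivAt_id (xs j)).sub_const (xs j)).const_mul (Ψ i j)).const_add (r i)
      have h2 := h1.pow 2
      apply h2.congr_deriv
      simp
    have ha := (arctan_abs_deriv δ hδ (xs j) hjne).const_mul lam
    simpa [hs, mul_assoc, hF, Pi.add_def] using hq.add ha
  have hzero := hloc.hasDerivAt_eq_zero hD
  -- identify the transpose entry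
  have htr : Ψ.transpose.mulVec r j = ∑ i, r i * Ψ i j := by
    simp [Matrix.mulVec, dotProduct, Matrix.transpose_apply, mul_comm]
  have hsum : ∑ i, 2 * r i * Ψ i j = 2 * Ψ.transpose.mulVec r j := by
    rw [htr, Finset.mul_sum]; exact Finset.sum_congr rfl fun i _ => by ring
  rw [hsum] at hzero
  have hkey : Ψ.transpose.mulVec r j = -(lam * (s * (δ / (δ ^ 2 + (xs j) ^ 2)))) / 2 := by
    linarith
  have hs2 : s ^ 2 = 1 := by
    rcases lt_or_ge 0 (xs j) with h | h <;> simp [hs, h]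
  have hpos2 : (0:ℝ) < δ ^ 2 + (xs j) ^ 2 := by positivity
  have hsq : (Ψ.transpose.mulVec r j) ^ 2
      = lam ^ 2 / 4 * (δ ^ 2 / (δ ^ 2 + (xs j) ^ 2) ^ 2) := by
    rw [hkey]
    field_simp
    linear_combination 4 * hs2
  have hfin : lam ^ 2 / 4 * (δ ^ 2 / (δ ^ 2 + (⨆ i, |xs i|) ^ 2) ^ 2)
      = (Ψ.transpose.mulVec r j) ^ 2 := by
    rw [hsq, hsup, sq_abs]
  rw [ge_iff_le, hfin]
  exact Finset.single_le_sum
    (f := fun j' => (Ψ.transpose.mulVec (fun i => Ψ.mulVec xs i - b i)) j' ^ 2)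
    (fun i _ => sq_nonneg _) (Finset.mem_univ j)
end

section
/- Let δ > 0 and ρ₀ ∈ ℝ with ρ₀ ≠ 0, and set β := δ/(|ρ₀|·(δ² + ρ₀²)). Then for every ρ ∈ ℝ, (β/2)·ρ² − arctan(|ρ|/δ) ≥ (β/2)·ρ₀² − arctan(|ρ₀|/δ); i.e., the quadratic ρ ↦ (β/2)ρ² majorizes ρ ↦ arctan(|ρ|/δ) up to an additive constant, with equality at ρ = ±ρ₀. -/
lemma arctan_slope_bounds {a b : ℝ} (ha : 0 ≤ a) (hab : a ≤ b) :
    (b - a) / (1 + b ^ 2) ≤ Real.arctan b - Real.arctan a ∧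
    Real.arctan b - Real.arctan a ≤ (b - a) / (1 + a ^ 2) := by
  rcases eq_or_lt_of_le hab with rfl | h
  · simp
  · obtain ⟨c, hc, hceq⟩ := exists_hasDerivAt_eq_slope Real.arctan
      (fun x => 1 / (1 + x ^ 2)) h Real.continuous_arctan.continuousOn
      (fun x _ => Real.hasDerivAt_arctan x)
    have hc1 : a < c := hc.1
    have hc2 : c < b := hc.2
    have hcc : (0:ℝ) < 1 + c ^ 2 := by positivity
    have hba : 0 < b - a := by linarith
    have key : Real.arctan b - Real.arctan a = (b - a) / (1 + c ^ 2) := by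
      have h2 : (1:ℝ) / (1 + c ^ 2) = (Real.arctan b - Real.arctan a) / (b - a) := hceq
      field_simp at h2 ⊢
      linarith
    have hc0 : 0 ≤ c := le_of_lt (lt_of_le_of_lt ha hc1)
    have hb2 : (0:ℝ) < 1 + b ^ 2 := by positivity
    have ha2 : (0:ℝ) < 1 + a ^ 2 := by positivity
    constructor <;> rw [key]
    · apply div_le_div_of_nonneg_left hba.le hcc
      nlinarith
    · apply div_le_div_of_nonneg_left hba.le ha2
      nlinarith

/-- For δ > 0, ρ₀ ≠ 0 and β = δ/(|ρ₀|(δ² + ρ₀²)), the quadratic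
ρ ↦ (β/2)ρ² majorizes ρ ↦ arctan(|ρ|/δ) up to an additive constant, with equality at
ρ = ±ρ₀. -/
theorem stmt13 (δ ρ₀ β : ℝ) (hδ : 0 < δ) (hρ₀ : ρ₀ ≠ 0)
    (hβ : β = δ / (|ρ₀| * (δ ^ 2 + ρ₀ ^ 2))) :
    (∀ ρ : ℝ,
      β / 2 * ρ ^ 2 - Real.arctan (|ρ| / δ) ≥
        β / 2 * ρ₀ ^ 2 - Real.arctan (|ρ₀| / δ)) ∧
    β / 2 * ρ₀ ^ 2 - Real.arctan (|ρ₀| / δ) =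
      β / 2 * (-ρ₀) ^ 2 - Real.arctan (|(-ρ₀)| / δ) := by
  have hr0 : 0 < |ρ₀| := abs_pos.mpr hρ₀
  set r₀ := |ρ₀| with hr₀def
  have hsum : (0:ℝ) < δ ^ 2 + ρ₀ ^ 2 := by positivity
  have hsq : ρ₀ ^ 2 = r₀ ^ 2 := (sq_abs ρ₀).symm
  constructor
  · intro ρ
    set r := |ρ| with hrdef
    have hr : 0 ≤ r := abs_nonneg ρ
    have hsqr : ρ ^ 2 = r ^ 2 := (sq_abs ρ).symm
    rw [hsq, hsqr]
    have hsum' : δ ^ 2 + ρ₀ ^ 2 = δ ^ 2 + r₀ ^ 2 := by rw [hsq]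
    rw [hsum'] at hβ
    have hden : (0:ℝ) < δ ^ 2 + r₀ ^ 2 := by rw [← hsum']; exact hsum
    rcases le_total r r₀ with hcase | hcase
    · -- r ≤ r₀ : use lower bound on arctan(r₀/δ) - arctan(r/δ)
      have hb := (arctan_slope_bounds (a := r / δ) (b := r₀ / δ)
        (by positivity) (by gcongr)).1
      have hone : 1 + (r₀ / δ) ^ 2 = (δ ^ 2 + r₀ ^ 2) / δ ^ 2 := by
        field_simp
      have hbb : δ * (r₀ - r) / (δ ^ 2 + r₀ ^ 2) ≤
          Real.arctan (r₀ / δ) - Real.arctan (r / δ) := by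
        calc δ * (r₀ - r) / (δ ^ 2 + r₀ ^ 2)
            = (r₀ / δ - r / δ) / (1 + (r₀ / δ) ^ 2) := by
              rw [hone]; field_simp
          _ ≤ _ := hb
      have halg : β / 2 * r ^ 2 - β / 2 * r₀ ^ 2 ≥
          -(δ * (r₀ - r) / (δ ^ 2 + r₀ ^ 2)) := by
        rw [hβ, ge_iff_le, neg_le, ← sub_nonneg]
        field_simp
        nlinarith [mul_nonneg (mul_nonneg hδ.le (sub_nonneg.mpr hcase)) (sub_nonneg.mpr hcase)]
      linarith
    · -- r₀ ≤ r : use upper bound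
      have hb := (arctan_slope_bounds (a := r₀ / δ) (b := r / δ)
        (by positivity) (by gcongr)).2
      have hone : 1 + (r₀ / δ) ^ 2 = (δ ^ 2 + r₀ ^ 2) / δ ^ 2 := by
        field_simp
      have hbb : Real.arctan (r / δ) - Real.arctan (r₀ / δ) ≤
          δ * (r - r₀) / (δ ^ 2 + r₀ ^ 2) := by
        calc Real.arctan (r / δ) - Real.arctan (r₀ / δ) ≤
            (r / δ - r₀ / δ) / (1 + (r₀ / δ) ^ 2) := hb
          _ = δ * (r - r₀) / (δ ^ 2 + r₀ ^ 2) := by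
              rw [hone]; field_simp
      have halg : β / 2 * r ^ 2 - β / 2 * r₀ ^ 2 ≥
          δ * (r - r₀) / (δ ^ 2 + r₀ ^ 2) := by
        rw [hβ, ge_iff_le, ← sub_nonneg]
        field_simp
        nlinarith [mul_nonneg (mul_nonneg hδ.le (sub_nonneg.mpr hcase)) (sub_nonneg.mpr hcase)]
      linarith
  · rw [abs_neg, ← hr₀def, neg_pow]
    ring_nf
end

section
/- Let δ > 0 and ρ⁰ ∈ ℝⁿ with all entries nonzero, and let B ∈ ℝ^{n×n} be the diagonal matrix with diagonal entries B_pp := (1/2)·δ/(|ρ⁰_p|·(δ² + (ρ⁰_p)²)). Then for every ρ ∈ ℝⁿ, ∑_{p=1}^n arctan(|ρ_p|/δ) − ∑_{p=1}^n arctan(|ρ⁰_p|/δ) ≤ ρᵀBρ − (ρ⁰)ᵀBρ⁰. -/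
open Finset Matrix

lemma arctan_mvt_bound (a b : ℝ) (ha : 0 ≤ a) (hb : 0 < b) :
    Real.arctan a - Real.arctan b ≤ (a - b) / (1 + b ^ 2) := by
  rcases eq_or_ne a b with rfl | hne
  · simp
  have hbpos : 0 < 1 + b ^ 2 := by positivity
  rcases hne.lt_or_gt with h | h
  · obtain ⟨ξ, hξ, hslope⟩ := exists_hasDerivAt_eq_slope Real.arctan
      (fun x => 1 / (1 + x ^ 2)) h
      (Real.continuous_arctan.continuousOn)
      (fun x _ => Real.hasDerivAt_arctan x)
    have hξa : a < ξ := hξ.1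
    have hξb : ξ < b := hξ.2
    have hξpos : 0 < 1 + ξ ^ 2 := by positivity
    have hba : b - a ≠ 0 := by linarith
    field_simp [hba] at hslope
    have heq : Real.arctan a - Real.arctan b = (a - b) / (1 + ξ ^ 2) := by
      rw [eq_div_iff hξpos.ne']
      nlinarith [hslope]
    rw [heq, div_le_div_iff₀ hξpos hbpos]
    have hξnn : 0 ≤ ξ := le_of_lt (lt_of_le_of_lt ha hξa)
    nlinarith [mul_nonneg (mul_nonneg (by linarith : (0:ℝ) ≤ b - a) (by linarith : (0:ℝ) ≤ b - ξ)) (by linarith : (0:ℝ) ≤ b + ξ)]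
  · obtain ⟨ξ, hξ, hslope⟩ := exists_hasDerivAt_eq_slope Real.arctan
      (fun x => 1 / (1 + x ^ 2)) h
      (Real.continuous_arctan.continuousOn)
      (fun x _ => Real.hasDerivAt_arctan x)
    have hξb : b < ξ := hξ.1
    have hξpos : 0 < 1 + ξ ^ 2 := by positivity
    have hab : a - b ≠ 0 := by linarith
    field_simp [hab] at hslope
    have heq : Real.arctan a - Real.arctan b = (a - b) / (1 + ξ ^ 2) := by
      rw [eq_div_iff hξpos.ne']
      nlinarith [hslope]
    rw [heq, div_le_div_iff₀ hξpos hbpos]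
    nlinarith [mul_nonneg (mul_nonneg (by linarith : (0:ℝ) ≤ a - b) (by linarith : (0:ℝ) ≤ ξ - b)) (by linarith : (0:ℝ) ≤ ξ + b)]

lemma arctan_quad_bound (a b : ℝ) (ha : 0 ≤ a) (hb : 0 < b) :
    Real.arctan a - Real.arctan b ≤ (a ^ 2 - b ^ 2) / (2 * b * (1 + b ^ 2)) := by
  refine le_trans (arctan_mvt_bound a b ha hb) ?_
  have hbpos : 0 < 1 + b ^ 2 := by positivity
  rw [div_le_div_iff₀ hbpos (by positivity)]
  nlinarith [sq_nonneg (a - b), hbpos]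

/-- With B the diagonal matrix with entries
B_pp = (1/2)·δ/(|ρ⁰_p|(δ² + (ρ⁰_p)²)) (all entries of ρ⁰ nonzero), for every ρ,
‖ρ‖_{g_δ} − ‖ρ⁰‖_{g_δ} ≤ ρᵀBρ − (ρ⁰)ᵀBρ⁰. -/
theorem stmt14 {n : ℕ} (δ : ℝ) (hδ : 0 < δ) (ρ₀ : Fin n → ℝ)
    (hρ₀ : ∀ p, ρ₀ p ≠ 0)
    (B : Matrix (Fin n) (Fin n) ℝ)
    (hB : B = Matrix.diagonal (fun p => (1 / 2) * δ / (|ρ₀ p| * (δ ^ 2 + ρ₀ p ^ 2)))) :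
    ∀ ρ : Fin n → ℝ,
      (∑ p, Real.arctan (|ρ p| / δ)) - (∑ p, Real.arctan (|ρ₀ p| / δ)) ≤
        ρ ⬝ᵥ B.mulVec ρ - ρ₀ ⬝ᵥ B.mulVec ρ₀ := by
  intro ρ
  subst hB
  simp only [dotProduct, mulVec_diagonal]
  rw [← Finset.sum_sub_distrib, ← Finset.sum_sub_distrib]
  apply Finset.sum_le_sum
  intro p _
  have hb0 : 0 < |ρ₀ p| := abs_pos.mpr (hρ₀ p)
  have key := arctan_quad_bound (|ρ p| / δ) (|ρ₀ p| / δ) (by positivity) (by positivity)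
  refine key.trans (le_of_eq ?_)
  have hpos : 0 < δ ^ 2 + ρ₀ p ^ 2 := by positivity
  rw [div_pow, div_pow, sq_abs, sq_abs]
  field_simp
end

section
/- Let Ψ ∈ ℝ^{m×n}, r̂ ∈ ℝ^m, λ > 0, δ > 0, and let ρ⁰ ∈ ℝⁿ have all entries nonzero. Let B ∈ ℝ^{n×n} be the diagonal matrix with diagonal entries B_pp := (1/2)·δ/(|ρ⁰_p|·(δ² + (ρ⁰_p)²)). Then ΨᵀΨ + λB is positive definite (hence invertible), and the update ρ¹ := (ΨᵀΨ + λB)⁻¹Ψᵀr̂ satisfies λ·‖ρ¹‖_{g_δ} + ‖r̂ − Ψρ¹‖₂² ≤ λ·‖ρ⁰‖_{g_δ} + ‖r̂ − Ψρ⁰‖₂², with equality only if |ρ¹| = |ρ⁰| entrywise. -/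
open Finset Matrix

lemma aux_arctan_le_self {t : ℝ} (ht : 0 ≤ t) : Real.arctan t ≤ t := by
  rcases eq_or_lt_of_le ht with h | h
  · simp [← h]
  · have h1 : 0 < Real.arctan t := by
      simpa [Real.arctan_zero] using Real.arctan_strictMono h
    have h2 := Real.lt_tan h1 (Real.arctan_lt_pi_div_two t)
    rw [Real.tan_arctan] at h2
    exact h2.le

lemma aux_div_le_arctan {t : ℝ} (ht : 0 ≤ t) : t / (1 + t ^ 2) ≤ Real.arctan t := by
  have hθ : 0 ≤ Real.arctan t := by
    rcases eq_or_lt_of_le ht with h | h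
    · simp [← h]
    · exact le_of_lt (by simpa [Real.arctan_zero] using Real.arctan_strictMono h)
  have hs : Real.sin (Real.arctan t) * Real.cos (Real.arctan t) ≤ Real.arctan t := by
    have h2 : Real.sin (2 * Real.arctan t) ≤ 2 * Real.arctan t := Real.sin_le (by linarith)
    rw [Real.sin_two_mul] at h2
    linarith
  have hsqrt : Real.sqrt (1 + t ^ 2) * Real.sqrt (1 + t ^ 2) = 1 + t ^ 2 :=
    Real.mul_self_sqrt (by positivity)
  have heq : Real.sin (Real.arctan t) * Real.cos (Real.arctan t) = t / (1 + t ^ 2) := by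
    rw [Real.sin_arctan, Real.cos_arctan, div_mul_div_comm, mul_one, hsqrt]
  linarith [heq ▸ hs]

lemma aux_tangent {u v : ℝ} (hu : 0 ≤ u) (hv : 0 ≤ v) :
    Real.arctan u ≤ Real.arctan v + (u - v) / (1 + v ^ 2) := by
  have hpos : (0:ℝ) < 1 + u * v := by nlinarith
  have key : Real.arctan u - Real.arctan v = Real.arctan ((u - v) / (1 + u * v)) := by
    have h := Real.arctan_add (x := u) (y := -v) (by nlinarith)
    rw [Real.arctan_neg] at h
    have h2 : (u + -v) / (1 - u * -v) = (u - v) / (1 + u * v) := by ring_nf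
    rw [h2] at h
    linarith
  set w := (u - v) / (1 + u * v) with hw
  rcases le_or_gt v u with hvu | huv
  · have hw0 : 0 ≤ w := div_nonneg (by linarith) hpos.le
    have h1 : Real.arctan w ≤ w := aux_arctan_le_self hw0
    have h2 : w ≤ (u - v) / (1 + v ^ 2) := by
      rw [hw, div_le_div_iff₀ hpos (by positivity)]
      nlinarith [mul_nonneg hv (sq_nonneg (u - v))]
    linarith
  · have h1 : Real.arctan w ≤ w / (1 + w ^ 2) := by
      have h := aux_div_le_arctan (t := -w) (by
        rw [hw]
        have : u - v ≤ 0 := by linarith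
        have := div_nonpos_of_nonpos_of_nonneg this hpos.le
        linarith)
      rw [Real.arctan_neg, neg_div, neg_sq] at h
      have h' : -(w / (1 + w ^ 2)) ≤ -Real.arctan w := h
      linarith
    have h2 : w / (1 + w ^ 2) ≤ (u - v) / (1 + v ^ 2) := by
      have hw2 : w / (1 + w ^ 2) = (u - v) * (1 + u * v) / ((1 + u ^ 2) * (1 + v ^ 2)) := by
        rw [hw]
        have hne : (1:ℝ) + u * v ≠ 0 := hpos.ne'
        field_simp
        ring
      rw [hw2, div_le_div_iff₀ (by positivity) (by positivity)]
      nlinarith [mul_nonneg (mul_nonneg (sq_nonneg (u - v)) hu) (by positivity : (0:ℝ) ≤ 1 + v ^ 2)]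
    linarith

lemma aux_scalar {δ : ℝ} (hδ : 0 < δ) {x x₀ : ℝ} (hx₀ : x₀ ≠ 0) :
    Real.arctan (|x| / δ) ≤ Real.arctan (|x₀| / δ) +
      (1 / 2) * δ / (|x₀| * (δ ^ 2 + x₀ ^ 2)) * (x ^ 2 - x₀ ^ 2) := by
  have ha : (0:ℝ) ≤ |x| := abs_nonneg x
  have ha₀ : (0:ℝ) < |x₀| := abs_pos.mpr hx₀
  have ht := aux_tangent (u := |x| / δ) (v := |x₀| / δ) (by positivity) (by positivity)
  refine ht.trans (add_le_add_right ?_ _)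
  have h1 : (|x| / δ - |x₀| / δ) / (1 + (|x₀| / δ) ^ 2) = δ * (|x| - |x₀|) / (δ ^ 2 + |x₀| ^ 2) := by
    field_simp
  rw [h1]
  have hx2 : x ^ 2 = |x| ^ 2 := (sq_abs x).symm
  have hx02 : x₀ ^ 2 = |x₀| ^ 2 := (sq_abs x₀).symm
  rw [hx2, hx02, div_mul_eq_mul_div, div_le_div_iff₀ (by positivity) (by positivity)]
  nlinarith [mul_nonneg (mul_nonneg hδ.le (by positivity : (0:ℝ) ≤ δ ^ 2 + |x₀| ^ 2))
    (sq_nonneg (|x| - |x₀|))]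

lemma aux_quad {n : ℕ} (A : Matrix (Fin n) (Fin n) ℝ) (hsymm : Aᵀ = A) (x y : Fin n → ℝ) :
    (x ⬝ᵥ A.mulVec x - 2 * ((A.mulVec y) ⬝ᵥ x)) - (y ⬝ᵥ A.mulVec y - 2 * ((A.mulVec y) ⬝ᵥ y))
      = (x - y) ⬝ᵥ A.mulVec (x - y) := by
  have hyx : y ⬝ᵥ A.mulVec x = (A.mulVec y) ⬝ᵥ x := by
    rw [Matrix.dotProduct_mulVec, ← Matrix.mulVec_transpose, hsymm]
  have hxy : x ⬝ᵥ A.mulVec y = (A.mulVec y) ⬝ᵥ x := dotProduct_comm _ _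
  have hyy : y ⬝ᵥ A.mulVec y = (A.mulVec y) ⬝ᵥ y := dotProduct_comm _ _
  rw [Matrix.mulVec_sub, dotProduct_sub, sub_dotProduct, sub_dotProduct]
  linarith

/-- With B the diagonal matrix with entries
B_pp = (1/2)·δ/(|ρ⁰_p|(δ² + (ρ⁰_p)²)) (all entries of ρ⁰ nonzero), the matrix
ΨᵀΨ + λB is positive definite (hence invertible), and the reweighted update
ρ¹ = (ΨᵀΨ + λB)⁻¹Ψᵀrhat does not increase the objective
λ‖·‖_{g_δ} + ‖rhat − Ψ·‖₂², with equality only if |ρ¹| = |ρ⁰| entrywise. -/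
theorem stmt15 {m n : ℕ} (Ψ : Matrix (Fin m) (Fin n) ℝ) (rhat : Fin m → ℝ)
    (lam δ : ℝ) (hlam : 0 < lam) (hδ : 0 < δ)
    (ρ₀ : Fin n → ℝ) (hρ₀ : ∀ p, ρ₀ p ≠ 0)
    (B : Matrix (Fin n) (Fin n) ℝ)
    (hB : B = Matrix.diagonal (fun p => (1 / 2) * δ / (|ρ₀ p| * (δ ^ 2 + ρ₀ p ^ 2)))) :
    (Ψ.transpose * Ψ + lam • B).PosDef ∧
    IsUnit (Ψ.transpose * Ψ + lam • B) ∧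
    ∀ ρ₁ : Fin n → ℝ,
      ρ₁ = (Ψ.transpose * Ψ + lam • B)⁻¹.mulVec (Ψ.transpose.mulVec rhat) →
      (lam * ∑ p, Real.arctan (|ρ₁ p| / δ) + ∑ i, (rhat i - Ψ.mulVec ρ₁ i) ^ 2 ≤
          lam * ∑ p, Real.arctan (|ρ₀ p| / δ) + ∑ i, (rhat i - Ψ.mulVec ρ₀ i) ^ 2) ∧
        (lam * ∑ p, Real.arctan (|ρ₁ p| / δ) + ∑ i, (rhat i - Ψ.mulVec ρ₁ i) ^ 2 =
            lam * ∑ p, Real.arctan (|ρ₀ p| / δ) + ∑ i, (rhat i - Ψ.mulVec ρ₀ i) ^ 2 →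
          ∀ p, |ρ₁ p| = |ρ₀ p|) := by
  set d : Fin n → ℝ := fun p => (1 / 2) * δ / (|ρ₀ p| * (δ ^ 2 + ρ₀ p ^ 2)) with hd
  set A : Matrix (Fin n) (Fin n) ℝ := Ψ.transpose * Ψ + lam • B with hA_def
  have hdpos : ∀ p, 0 < d p := fun p => by
    have h := abs_pos.mpr (hρ₀ p)
    rw [hd]
    positivity
  have h1 : (Ψᵀ * Ψ).PosSemidef := by
    have h := Matrix.posSemidef_conjTranspose_mul_self Ψ
    rwa [Matrix.conjTranspose_eq_transpose_of_trivial] at h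
  have h2 : (lam • B).PosDef := by
    rw [hB, ← Matrix.diagonal_smul]
    exact Matrix.PosDef.diagonal fun p => by
      have := hdpos p
      rw [hd] at this
      simp only [Pi.smul_apply, smul_eq_mul]
      exact mul_pos hlam this
  have hA : A.PosDef := Matrix.PosDef.posSemidef_add h1 h2
  have hdet : IsUnit A.det := isUnit_iff_ne_zero.mpr hA.det_pos.ne'
  refine ⟨hA, (Matrix.isUnit_iff_isUnit_det A).mpr hdet, ?_⟩
  intro ρ₁ hρ₁
  set b : Fin n → ℝ := Ψᵀ.mulVec rhat with hb
  have hAρ₁ : A.mulVec ρ₁ = b := by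
    rw [hρ₁, Matrix.mulVec_mulVec, Matrix.mul_nonsing_inv A hdet, Matrix.one_mulVec]
  have hsymm : Aᵀ = A := by
    rw [hA_def, Matrix.transpose_add, Matrix.transpose_mul, Matrix.transpose_transpose,
      Matrix.transpose_smul, hB, Matrix.diagonal_transpose]
  have key : ∀ ρ : Fin n → ℝ,
      lam * (∑ p, d p * (ρ p) ^ 2) + ∑ i, (rhat i - Ψ.mulVec ρ i) ^ 2
        = (ρ ⬝ᵥ A.mulVec ρ - 2 * (b ⬝ᵥ ρ)) + rhat ⬝ᵥ rhat := by
    intro ρ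
    have e1 : rhat ⬝ᵥ Ψ.mulVec ρ = b ⬝ᵥ ρ := by
      rw [hb, Matrix.dotProduct_mulVec, ← Matrix.mulVec_transpose]
    have e2 : (Ψ.mulVec ρ) ⬝ᵥ (Ψ.mulVec ρ) = ρ ⬝ᵥ (Ψᵀ * Ψ).mulVec ρ := by
      rw [← Matrix.mulVec_mulVec, Matrix.dotProduct_mulVec, ← Matrix.mulVec_transpose]
      exact dotProduct_comm _ _
    have e3 : ρ ⬝ᵥ (lam • B).mulVec ρ = lam * ∑ p, d p * (ρ p) ^ 2 := by
      rw [hB, ← Matrix.diagonal_smul]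
      simp only [dotProduct, Matrix.mulVec_diagonal, Pi.smul_apply, smul_eq_mul]
      rw [Finset.mul_sum]
      exact Finset.sum_congr rfl fun p _ => by rw [hd]; ring
    have e4 : ρ ⬝ᵥ A.mulVec ρ = ρ ⬝ᵥ (Ψᵀ * Ψ).mulVec ρ + ρ ⬝ᵥ (lam • B).mulVec ρ := by
      rw [hA_def, Matrix.add_mulVec, dotProduct_add]
    have e5 : ∑ i, (rhat i - Ψ.mulVec ρ i) ^ 2
        = rhat ⬝ᵥ rhat - 2 * (rhat ⬝ᵥ Ψ.mulVec ρ) + (Ψ.mulVec ρ) ⬝ᵥ (Ψ.mulVec ρ) := by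
      simp only [dotProduct]
      rw [Finset.mul_sum, ← Finset.sum_sub_distrib, ← Finset.sum_add_distrib]
      exact Finset.sum_congr rfl fun i _ => by ring
    linarith [e1, e2, e3, e4, e5]
  have hquad := aux_quad A hsymm ρ₀ ρ₁
  rw [hAρ₁] at hquad
  have hQ0 : 0 ≤ (ρ₀ - ρ₁) ⬝ᵥ A.mulVec (ρ₀ - ρ₁) := by
    have h := hA.posSemidef.dotProduct_mulVec_nonneg (ρ₀ - ρ₁)
    simpa using h
  have hsum : ∑ p, Real.arctan (|ρ₁ p| / δ) ≤
      ∑ p, (Real.arctan (|ρ₀ p| / δ) + d p * ((ρ₁ p) ^ 2 - (ρ₀ p) ^ 2)) :=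
    Finset.sum_le_sum fun p _ => by rw [hd]; exact aux_scalar hδ (hρ₀ p)
  have hsplit : ∑ p, (Real.arctan (|ρ₀ p| / δ) + d p * ((ρ₁ p) ^ 2 - (ρ₀ p) ^ 2))
      = ∑ p, Real.arctan (|ρ₀ p| / δ) + ((∑ p, d p * (ρ₁ p) ^ 2) - ∑ p, d p * (ρ₀ p) ^ 2) := by
    simp only [mul_sub]
    rw [Finset.sum_add_distrib, Finset.sum_sub_distrib]
  have hmul := mul_le_mul_of_nonneg_left hsum hlam.le
  rw [hsplit] at hmul
  have k1 := key ρ₁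
  rw [hAρ₁] at k1
  have k0 := key ρ₀
  constructor
  · nlinarith [hquad, hQ0, hmul, k1, k0]
  · intro heq
    have hz : ρ₀ - ρ₁ = 0 := by
      by_contra hne
      have hpos := hA.dotProduct_mulVec_pos hne
      simp only [star_trivial] at hpos
      nlinarith [hquad, hmul, k1, k0]
    have hρeq : ρ₁ = ρ₀ := (sub_eq_zero.mp hz).symm
    intro p
    rw [hρeq]
end
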